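/- arXiv:1308.2507 — 6 statements merged into one kernel-verified Lean document; each statement's English description precedes it below -/
import Mathlib

section
/- In any separation algebra Σ, footprint addition ∘ is well-defined: for all σ1, σ2, σ1', σ2' ∈ Σ with δ(σ1) = δ(σ1') and δ(σ2) = δ(σ2'), the product σ1 * σ2 is defined if and only if σ1' * σ2' is defined, and when both are defined, δ(σ1 * σ2) = δ(σ1' * σ2'). -/
/-- A separation algebra: a set with a partial commutative, associative,
cancellative operation `op` (partiality modelled via `Option`) and a unit. -/
structure SepAlg (α : Type*) where
  op : α → α → Option α
  unit : α
  comm : ∀ a b, op a b = op b a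
  assoc : ∀ a b c, (op a b).bind (fun x => op x c) = (op b c).bind (fun y => op a y)
  unit_op : ∀ a, op unit a = some a
  cancel : ∀ a b c d, op a b = some d → op a c = some d → b = c

/-- The footprint of a state `σ`. -/
def foot {α : Type*} (SA : SepAlg α) (σ : α) : Set α :=
  {σ' | ∀ σ'', (SA.op σ' σ'').isSome ↔ (SA.op σ σ'').isSome}

lemma foot_eq_iff {α : Type*} (SA : SepAlg α) {a b : α} (h : foot SA a = foot SA b) :
    ∀ τ, (SA.op a τ).isSome ↔ (SA.op b τ).isSome := by
  have ha : a ∈ foot SA a := fun τ => Iff.rfl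
  rw [h] at ha
  exact ha

lemma bind_isSome_congr {α : Type*} {o : Option α} {f g : α → Option α}
    (h : ∀ x, (f x).isSome ↔ (g x).isSome) : (o.bind f).isSome ↔ (o.bind g).isSome := by
  cases o with
  | none => exact Iff.rfl
  | some x => simpa using h x

lemma op_some_isSome {α : Type*} (SA : SepAlg α) {a b c : α} (h : SA.op a b = some c) :
    ∀ τ, (SA.op c τ).isSome ↔ ((SA.op b τ).bind (fun x => SA.op a x)).isSome := by
  intro τ
  have := SA.assoc a b τ
  rw [h] at this
  simp only [Option.bind_some] at this
  rw [this]

/-- footprint addition is well-defined: if `δ(σ1) = δ(σ1')` and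
`δ(σ2) = δ(σ2')`, then `σ1 * σ2` is defined iff `σ1' * σ2'` is defined, and
when both are defined the footprints of the results agree. -/
theorem fpAdd_well_defined {α : Type*} (SA : SepAlg α) (σ1 σ2 σ1' σ2' : α)
    (h1 : foot SA σ1 = foot SA σ1') (h2 : foot SA σ2 = foot SA σ2') :
    ((SA.op σ1 σ2).isSome ↔ (SA.op σ1' σ2').isSome) ∧
    (∀ σ12 σ12', SA.op σ1 σ2 = some σ12 → SA.op σ1' σ2' = some σ12' →
      foot SA σ12 = foot SA σ12') := by
  have e1 := foot_eq_iff SA h1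
  have e2 := foot_eq_iff SA h2
  have key : (SA.op σ1 σ2).isSome ↔ (SA.op σ1' σ2').isSome := by
    rw [e1 σ2, SA.comm σ1' σ2, e2 σ1', SA.comm σ2' σ1']
  refine ⟨key, ?_⟩
  intro σ12 σ12' hs hs'
  have hmid : (SA.op σ1' σ2).isSome := by
    rw [← e1 σ2, hs]; rfl
  obtain ⟨w, hw⟩ := Option.isSome_iff_exists.mp hmid
  have hw' : SA.op σ2 σ1' = some w := (SA.comm σ1' σ2) ▸ hw
  have hs'' : SA.op σ2' σ1' = some σ12' := (SA.comm σ1' σ2') ▸ hs'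
  have chain : ∀ σ'', (SA.op σ12 σ'').isSome ↔ (SA.op σ12' σ'').isSome := by
    intro σ''
    calc (SA.op σ12 σ'').isSome
        ↔ ((SA.op σ2 σ'').bind fun x => SA.op σ1 x).isSome := op_some_isSome SA hs σ''
      _ ↔ ((SA.op σ2 σ'').bind fun x => SA.op σ1' x).isSome := bind_isSome_congr e1
      _ ↔ (SA.op w σ'').isSome := (op_some_isSome SA hw σ'').symm
      _ ↔ ((SA.op σ1' σ'').bind fun x => SA.op σ2 x).isSome := op_some_isSome SA hw' σ''
      _ ↔ ((SA.op σ1' σ'').bind fun x => SA.op σ2' x).isSome := bind_isSome_congr e2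
      _ ↔ (SA.op σ12' σ'').isSome := (op_some_isSome SA hs'' σ'').symm
  ext τ
  simp only [foot, Set.mem_setOf_eq]
  constructor <;> intro hτ σ''
  · rw [hτ σ'', chain σ'']
  · rw [hτ σ'', ← chain σ'']
end

section
/- In any separation algebra Σ whose operation * is cancellative on footprints, for all footprints l1, l2, l3 ∈ F(Σ): if l1 ∘ l2 is defined and l1 \\ l3 is defined, then (l1 ∘ l2) \\ l3 is defined and (l1 ∘ l2) \\ l3 = (l1 \\ l3) ∘ l2. -/
/-- The `*` operation is cancellative on footprints. -/
def CancOnFoot {α : Type*} (SA : SepAlg α) : Prop :=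
  ∀ σ1 σ2 σ1' σ2' σ σ', SA.op σ1 σ2 = some σ → SA.op σ1' σ2' = some σ' →
    foot SA σ = foot SA σ' → foot SA σ1 = foot SA σ1' → foot SA σ2 = foot SA σ2'

/-- `FpAdd SA l1 l2 l` means footprint addition `l1 ∘ l2` is defined with value `l`. -/
def FpAdd {α : Type*} (SA : SepAlg α) (l1 l2 l : Set α) : Prop :=
  ∃ σ1 σ2 σ, foot SA σ1 = l1 ∧ foot SA σ2 = l2 ∧ SA.op σ1 σ2 = some σ ∧ foot SA σ = l

/-- `FpSub SA l1 l2 l` means footprint subtraction `l2 \\ l1` is defined with value `l`. -/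
def FpSub {α : Type*} (SA : SepAlg α) (l1 l2 l : Set α) : Prop :=
  ∃ σ1 σ2 σ, foot SA σ1 = l1 ∧ foot SA σ2 = l2 ∧ SA.op σ1 σ = some σ2 ∧ foot SA σ = l

lemma foot_same_isSome {α : Type*} (SA : SepAlg α) {a a' : α}
    (h : foot SA a = foot SA a') : ∀ x, (SA.op a x).isSome ↔ (SA.op a' x).isSome := by
  have ha : a ∈ foot SA a := fun x => Iff.rfl
  rw [h] at ha
  exact ha

lemma foot_congr {α : Type*} (SA : SepAlg α) {a a' b c c' : α}
    (h : foot SA a = foot SA a')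
    (h1 : SA.op a b = some c) (h2 : SA.op a' b = some c') :
    foot SA c = foot SA c' := by
  have key : ∀ x, (SA.op c x).isSome ↔ (SA.op c' x).isSome := by
    intro x
    have e1 := SA.assoc a b x
    have e2 := SA.assoc a' b x
    rw [h1] at e1
    rw [h2] at e2
    simp only [Option.bind_eq_bind, Option.bind_some] at e1 e2
    rw [e1, e2]
    cases hbx : SA.op b x with
    | none => simp
    | some y => simp [foot_same_isSome SA h y]
  ext σ'
  constructor <;> intro hm x
  · rw [hm x]; exact key x
  · rw [hm x]; exact (key x).symm

/-- if `l1 ∘ l2` is defined (with value `l12`) and `l1 \\ l3` is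
defined (with value `ld`), then `(l1 ∘ l2) \\ l3` is defined and equals
`(l1 \\ l3) ∘ l2`. -/
theorem fp_sub_of_add {α : Type*} (SA : SepAlg α) (hc : CancOnFoot SA)
    (l1 l2 l3 l12 ld : Set α)
    (hadd : FpAdd SA l1 l2 l12) (hsub : FpSub SA l3 l1 ld) :
    ∃ l, FpSub SA l3 l12 l ∧ FpAdd SA ld l2 l := by
  obtain ⟨σ1, σ2, σ, hf1, hf2, hop, hf12⟩ := hadd
  obtain ⟨τ3, τ1, τ, hf3, hf1', hop', hfd⟩ := hsub
  -- op τ1 σ2 is defined since foot τ1 = foot σ1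
  have hsame := foot_same_isSome SA (hf1'.trans hf1.symm) σ2
  have hρ : ∃ ρ, SA.op τ1 σ2 = some ρ := by
    rw [← Option.isSome_iff_exists, hsame, hop]; rfl
  obtain ⟨ρ, hρ⟩ := hρ
  have hfρ : foot SA ρ = l12 :=
    (foot_congr SA (hf1'.trans hf1.symm) hρ hop).trans hf12
  -- (τ3 * τ) * σ2 = ρ, so τ * σ2 defined = μ and τ3 * μ = ρ
  have hassoc := SA.assoc τ3 τ σ2
  rw [hop'] at hassoc
  simp only [Option.bind_eq_bind, Option.bind_some] at hassoc
  rw [hρ] at hassoc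
  cases hμ : SA.op τ σ2 with
  | none => rw [hμ] at hassoc; simp at hassoc
  | some μ =>
    rw [hμ] at hassoc
    simp only [Option.bind_eq_bind, Option.bind_some] at hassoc
    exact ⟨foot SA μ,
      ⟨τ3, ρ, μ, hf3, hfρ, hassoc.symm, rfl⟩,
      ⟨τ, σ2, μ, hfd, hf2, hμ, rfl⟩⟩
end

section
/- Let Σ be a separation algebra whose operation * is cancellative on footprints, and let S and S' be histories such that S' is obtained from S by deleting some call actions (S is identical to S' except for extra calls). If S is balanced from a footprint l1 and S' is balanced from a footprint l2 with l2 ⪯ l1, then: the ∘-combination l_c of the footprints δ(σ) of the states σ transferred at the deleted (extra) call actions of S is defined; S' is balanced from l1; ⟦S⟧♯ l1 = (⟦S'⟧♯ l1) ∘ l_c; and ⟦S'⟧♯ l2 ⪯ ⟦S'⟧♯ l1. -/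
/-- Interface actions: calls and returns with a transferred state. -/
inductive Act (Tid Mtd α : Type*) where
  | call : Tid → Mtd → α → Act Tid Mtd α
  | ret : Tid → Mtd → α → Act Tid Mtd α

namespace Act

def thread {Tid Mtd α : Type*} : Act Tid Mtd α → Tid
  | .call t _ _ => t
  | .ret t _ _ => t

def isCall {Tid Mtd α : Type*} : Act Tid Mtd α → Prop
  | .call _ _ _ => True
  | .ret _ _ _ => False

def isRet {Tid Mtd α : Type*} : Act Tid Mtd α → Prop
  | .call _ _ _ => False
  | .ret _ _ _ => True

end Act

/-- `altFrom pending l` : the list `l` alternates call and return actions over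
matching methods; `pending = none` means a call is expected next, `pending = some m`
means a return from method `m` is expected next. -/
def altFrom {Tid Mtd α : Type*} : Option Mtd → List (Act Tid Mtd α) → Prop
  | _, [] => True
  | none, (Act.call _ m _) :: rest => altFrom (some m) rest
  | none, (Act.ret _ _ _) :: _ => False
  | some m, (Act.ret _ m' _) :: rest => m' = m ∧ altFrom none rest
  | some _, (Act.call _ _ _) :: _ => False

/-- A history: for every thread, its projection is an alternating sequence of
call and return actions over matching methods, starting with a call. -/
def IsHistory {Tid Mtd α : Type*} [DecidableEq Tid] (H : List (Act Tid Mtd α)) : Prop :=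
  ∀ t : Tid, altFrom none (H.filter (fun a => decide (a.thread = t)))

/-- `HEval SA l H l'` holds iff `⟦H⟧♯ l` is defined and equals `l'`. -/
def HEval {Tid Mtd α : Type*} (SA : SepAlg α) :
    Set α → List (Act Tid Mtd α) → Set α → Prop
  | l, [], l' => l = l'
  | l, (Act.call _ _ σ) :: rest, l' => ∃ lm, FpAdd SA l (foot SA σ) lm ∧ HEval SA lm rest l'
  | l, (Act.ret _ _ σ) :: rest, l' => ∃ lm, FpSub SA (foot SA σ) l lm ∧ HEval SA lm rest l'

/-- `DelCalls H H' ds` : `H'` is obtained from `H` by deleting some call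
actions, and `ds` is the list of states transferred at the deleted calls. -/
inductive DelCalls {Tid Mtd α : Type*} :
    List (Act Tid Mtd α) → List (Act Tid Mtd α) → List α → Prop
  | nil : DelCalls [] [] []
  | keep (a : Act Tid Mtd α) {H H' : List (Act Tid Mtd α)} {ds : List α} :
      DelCalls H H' ds → DelCalls (a :: H) (a :: H') ds
  | drop (t : Tid) (m : Mtd) (σ : α) {H H' : List (Act Tid Mtd α)} {ds : List α} :
      DelCalls H H' ds → DelCalls (Act.call t m σ :: H) H' (σ :: ds)

/-- `FpCombine SA ds l` : `l` is the `∘`-combination of the footprints of the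
states in `ds` (the empty combination being `δ(e)`). -/
def FpCombine {α : Type*} (SA : SepAlg α) : List α → Set α → Prop
  | [], l => l = foot SA SA.unit
  | σ :: rest, l => ∃ l', FpCombine SA rest l' ∧ FpAdd SA l' (foot SA σ) l

section FootAPI

variable {α : Type*} {SA : SepAlg α}

lemma foot_eq_isSome {σ σ' : α} (h : foot SA σ = foot SA σ') (τ : α) :
    (SA.op σ τ).isSome ↔ (SA.op σ' τ).isSome := by
  have hm : σ ∈ foot SA σ' := by rw [← h]; exact fun _ => Iff.rfl
  exact hm τ

lemma foot_eq_of_compat {σ σ' : α}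
    (h : ∀ τ, (SA.op σ τ).isSome ↔ (SA.op σ' τ).isSome) :
    foot SA σ = foot SA σ' := by
  ext x
  constructor <;> intro hx τ
  · exact (hx τ).trans (h τ)
  · exact (hx τ).trans (h τ).symm

lemma op_assoc_some {a b t : α} (hab : SA.op a b = some t) (c : α) :
    SA.op t c = (SA.op b c).bind (fun u => SA.op a u) := by
  have h := SA.assoc a b c
  rw [hab] at h
  exact h

lemma foot_congr_left {σ1 σ1' σ2 τ τ' : α} (h : foot SA σ1 = foot SA σ1')
    (h1 : SA.op σ1 σ2 = some τ) (h2 : SA.op σ1' σ2 = some τ') :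
    foot SA τ = foot SA τ' := by
  apply foot_eq_of_compat
  intro u
  rw [op_assoc_some h1 u, op_assoc_some h2 u]
  cases hbu : SA.op σ2 u with
  | none => simp
  | some v => simpa using foot_eq_isSome h v

lemma foot_congr_s5 {σ1 σ1' σ2 σ2' τ τ' : α} (h1 : foot SA σ1 = foot SA σ1')
    (h2 : foot SA σ2 = foot SA σ2')
    (e1 : SA.op σ1 σ2 = some τ) (e2 : SA.op σ1' σ2' = some τ') :
    foot SA τ = foot SA τ' := by
  have hd : (SA.op σ1' σ2).isSome := by
    rw [← foot_eq_isSome h1, e1]; rfl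
  obtain ⟨ρ, hρ⟩ := Option.isSome_iff_exists.mp hd
  exact (foot_congr_left h1 e1 hρ).trans
    (foot_congr_left h2 ((SA.comm σ2 σ1').trans hρ) ((SA.comm σ2' σ1').trans e2))

lemma FpAdd_unique {l1 l2 l l' : Set α} (h : FpAdd SA l1 l2 l)
    (h' : FpAdd SA l1 l2 l') : l = l' := by
  obtain ⟨a, b, t, ha, hb, he, ht⟩ := h
  obtain ⟨a', b', t', ha', hb', he', ht'⟩ := h'
  rw [← ht, ← ht']
  exact foot_congr_s5 (ha.trans ha'.symm) (hb.trans hb'.symm) he he'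

lemma FpAdd_comm {a b x : Set α} (h : FpAdd SA a b x) : FpAdd SA b a x := by
  obtain ⟨σa, σb, τ, hfa, hfb, hab, hfτ⟩ := h
  exact ⟨σb, σa, τ, hfb, hfa, (SA.comm σb σa).trans hab, hfτ⟩

lemma FpAdd_assoc {a b c x y : Set α} (h1 : FpAdd SA a b x) (h2 : FpAdd SA x c y) :
    ∃ z, FpAdd SA b c z ∧ FpAdd SA a z y := by
  obtain ⟨σa, σb, τ, hfa, hfb, hab, hfτ⟩ := h1
  obtain ⟨τ', σc, ρ, hfτ', hfc, hτc, hfρ⟩ := h2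
  have hd : (SA.op τ σc).isSome := by
    rw [foot_eq_isSome (hfτ.trans hfτ'.symm), hτc]; rfl
  obtain ⟨ρ2, hρ2⟩ := Option.isSome_iff_exists.mp hd
  have hfρ2 : foot SA ρ2 = y := by
    rw [← hfρ]; exact foot_congr_left (hfτ.trans hfτ'.symm) hρ2 hτc
  have hass := op_assoc_some hab σc
  rw [hρ2] at hass
  cases hbc : SA.op σb σc with
  | none => rw [hbc] at hass; simp at hass
  | some u =>
    rw [hbc] at hass
    exact ⟨foot SA u, ⟨σb, σc, u, hfb, hfc, hbc, rfl⟩,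
      ⟨σa, u, ρ2, hfa, rfl, hass.symm, hfρ2⟩⟩

lemma FpAdd_exchange {a b c x y : Set α} (h1 : FpAdd SA a b x) (h2 : FpAdd SA x c y) :
    ∃ z, FpAdd SA a c z ∧ FpAdd SA z b y := by
  obtain ⟨z, hz1, hz2⟩ := FpAdd_assoc (FpAdd_comm h1) h2
  exact ⟨z, hz1, FpAdd_comm hz2⟩

lemma FpAdd_cancel (hc : CancOnFoot SA) {a b b' x : Set α}
    (h : FpAdd SA a b x) (h' : FpAdd SA a b' x) : b = b' := by
  obtain ⟨σa, σb, τ, hfa, hfb, hab, hfτ⟩ := h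
  obtain ⟨σa', σb', τ', hfa', hfb', hab', hfτ'⟩ := h'
  rw [← hfb, ← hfb']
  exact hc σa σb σa' σb' τ τ' hab hab' (hfτ.trans hfτ'.symm) (hfa.trans hfa'.symm)

lemma op_unit_right (σ : α) : SA.op σ SA.unit = some σ :=
  (SA.comm σ SA.unit).trans (SA.unit_op σ)

lemma FpAdd_unit_right (σ : α) :
    FpAdd SA (foot SA σ) (foot SA SA.unit) (foot SA σ) :=
  ⟨σ, SA.unit, σ, rfl, rfl, op_unit_right σ, rfl⟩

lemma FpAdd_unit_left_eq {b x : Set α} (h : FpAdd SA (foot SA SA.unit) b x) :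
    x = b := by
  obtain ⟨σe, σb, τ, hfe, hfb, he, hfτ⟩ := h
  rw [← hfτ, ← hfb]
  exact foot_congr_left hfe he (SA.unit_op σb)

lemma FpSub_iff_FpAdd {a b x : Set α} : FpSub SA a b x ↔ FpAdd SA a x b := by
  constructor
  · rintro ⟨σ1, σ2, σ, h1, h2, he, hx⟩; exact ⟨σ1, σ, σ2, h1, hx, he, h2⟩
  · rintro ⟨σ1, σ, σ2, h1, hx, he, h2⟩; exact ⟨σ1, σ2, σ, h1, h2, he, hx⟩

lemma main_lemma {Tid Mtd : Type*} (hc : CancOnFoot SA)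
    {H H' : List (Act Tid Mtd α)} {ds : List α} (hdel : DelCalls H H' ds) :
    ∀ k l1 l2 c d rk r2, HEval SA k H rk → HEval SA l2 H' r2 →
      FpAdd SA l1 c k → FpAdd SA l2 d l1 →
      ∃ lc r1', FpCombine SA ds lc ∧ HEval SA l1 H' r1' ∧
        (∃ lcc, FpAdd SA c lc lcc ∧ FpAdd SA r1' lcc rk) ∧ FpAdd SA r2 d r1' := by
  induction hdel with
  | nil =>
    intro k l1 l2 c d rk r2 he1 he2 hck hd
    have hk : k = rk := he1
    have hl : l2 = r2 := he2
    subst hk; subst hl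
    obtain ⟨σ1, σc, τ, hf1, hfc, _, _⟩ := id hck
    refine ⟨foot SA SA.unit, l1, rfl, rfl, ⟨c, ?_, hck⟩, hd⟩
    rw [← hfc]; exact FpAdd_unit_right σc
  | keep a hsub ih =>
    intro k l1 l2 c d rk r2 he1 he2 hck hd
    cases a with
    | call t m σ =>
      obtain ⟨km, hkadd, hkrest⟩ := he1
      obtain ⟨lm2, hl2add, hl2rest⟩ := he2
      obtain ⟨lm1, hlm1, hlm1c⟩ := FpAdd_exchange hck hkadd
      obtain ⟨g2, hg2, hg2d⟩ := FpAdd_exchange hd hlm1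
      have hge : g2 = lm2 := FpAdd_unique hg2 hl2add
      subst hge
      obtain ⟨lc, r1', hcomb, heval, hlcc, hrd⟩ :=
        ih km lm1 g2 c d rk r2 hkrest hl2rest hlm1c hg2d
      exact ⟨lc, r1', hcomb, ⟨lm1, hlm1, heval⟩, hlcc, hrd⟩
    | ret t m σ =>
      obtain ⟨km, hksub, hkrest⟩ := he1
      obtain ⟨lm2, hl2sub, hl2rest⟩ := he2
      have hkadd : FpAdd SA (foot SA σ) km k := FpSub_iff_FpAdd.mp hksub
      have hl2add : FpAdd SA (foot SA σ) lm2 l2 := FpSub_iff_FpAdd.mp hl2sub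
      obtain ⟨lm1, hlm2d, hσlm1⟩ := FpAdd_assoc hl2add hd
      obtain ⟨g, hlm1c, hσg⟩ := FpAdd_assoc hσlm1 hck
      have hge : g = km := FpAdd_cancel hc hσg hkadd
      subst hge
      obtain ⟨lc, r1', hcomb, heval, hlcc, hrd⟩ :=
        ih g lm1 lm2 c d rk r2 hkrest hl2rest hlm1c hlm2d
      exact ⟨lc, r1', hcomb, ⟨lm1, FpSub_iff_FpAdd.mpr hσlm1, heval⟩, hlcc, hrd⟩
  | drop t m σ hsub ih =>
    intro k l1 l2 c d rk r2 he1 he2 hck hd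
    obtain ⟨km, hkadd, hkrest⟩ := he1
    obtain ⟨c', hcσ, hl1c'⟩ := FpAdd_assoc hck hkadd
    obtain ⟨lc', r1', hcomb, heval, ⟨lcc, hclcc, hr1lcc⟩, hrd⟩ :=
      ih km l1 l2 c' d rk r2 hkrest he2 hl1c' hd
    obtain ⟨lc, hσlc', hclc⟩ := FpAdd_assoc hcσ hclcc
    exact ⟨lc, r1', ⟨lc', hcomb, FpAdd_comm hσlc'⟩, heval, ⟨lcc, hclc, hr1lcc⟩, hrd⟩

end FootAPI

/-- let `H` and `H'` be histories where `H'` is `H` with some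
call actions deleted (the deleted calls transferring the states `ds`).  If `H`
is balanced from `l1` (with result `r1`) and `H'` is balanced from `l2` (with
result `r2`) where `l2 ⪯ l1`, then: the `∘`-combination `lc` of the footprints
of the states in `ds` is defined; `H'` is balanced from `l1` (with some result
`r1'`); `⟦H⟧♯ l1 = (⟦H'⟧♯ l1) ∘ lc`, i.e. `r1 = r1' ∘ lc`; and
`⟦H'⟧♯ l2 ⪯ ⟦H'⟧♯ l1`, i.e. `r1' \\ r2` is defined. -/
theorem extra_calls_footprint {α Tid Mtd : Type*} [DecidableEq Tid]
    (SA : SepAlg α) (hc : CancOnFoot SA)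
    (H H' : List (Act Tid Mtd α)) (ds : List α)
    (hdel : DelCalls H H' ds)
    (hH : IsHistory H) (hH' : IsHistory H')
    (l1 l2 r1 r2 : Set α)
    (hfl1 : ∃ σ, foot SA σ = l1) (hfl2 : ∃ σ, foot SA σ = l2)
    (he1 : HEval SA l1 H r1) (he2 : HEval SA l2 H' r2)
    (hpre : ∃ l, FpSub SA l2 l1 l) :
    ∃ lc r1', FpCombine SA ds lc ∧ HEval SA l1 H' r1' ∧
      FpAdd SA r1' lc r1 ∧ ∃ lx, FpSub SA r2 r1' lx := by
  obtain ⟨dd, hdd⟩ := hpre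
  have hd : FpAdd SA l2 dd l1 := FpSub_iff_FpAdd.mp hdd
  obtain ⟨σ1, hσ1⟩ := hfl1
  have hck : FpAdd SA l1 (foot SA SA.unit) l1 := hσ1 ▸ FpAdd_unit_right σ1
  obtain ⟨lc, r1', hcomb, heval, ⟨lcc, hulcc, hr⟩, hrd⟩ :=
    main_lemma hc hdel l1 l1 l2 (foot SA SA.unit) dd r1 r2 he1 he2 hck hd
  have hle : lcc = lc := FpAdd_unit_left_eq hulcc
  subst hle
  exact ⟨lcc, r1', hcomb, heval, hr, dd, FpSub_iff_FpAdd.mpr hrd⟩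
end

section
/- In the separation algebra RAM_π, for every state σ the footprint δ(σ) is exactly the set of states σ' such that: dom σ' = dom σ; for every x with σ(x) = (u, π) and π < 1, also σ'(x) = (u, π); and for every x with σ(x) = (u, 1), σ'(x) = (u', 1) for some value u'. -/
/-- Permissions: real numbers in `(0, 1]`. -/
def Perm : Type := {p : ℝ // 0 < p ∧ p ≤ 1}

/-- `RAM_π`: finite partial functions from `Loc = {1,2,...}` (modelled as `ℕ+`)
to `Val × Perm`, with `Val = ℤ`. -/
def RAMp : Type := { f : ℕ+ → Option (ℤ × Perm) // {x | f x ≠ none}.Finite }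

open Classical in
/-- Pointwise combination of permission-carrying cells: when both sides are
defined they must agree on the value and their permissions must sum to at
most `1`, in which case the permissions are added. -/
noncomputable def pcomb (a b : Option (ℤ × Perm)) : Option (ℤ × Perm) :=
  match a, b with
  | none, b => b
  | some v, none => some v
  | some (u1, p1), some (u2, p2) =>
    if h : u1 = u2 ∧ p1.1 + p2.1 ≤ 1 then
      some (u1, ⟨p1.1 + p2.1, ⟨add_pos p1.2.1 p2.2.1, h.2⟩⟩)
    else none

/-- Compatibility `σ1 ♯ σ2` of two states of `RAM_π`. -/
def rampCompat (σ1 σ2 : RAMp) : Prop :=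
  ∀ x u1 p1 u2 p2, σ1.1 x = some (u1, p1) → σ2.1 x = some (u2, p2) →
    u1 = u2 ∧ p1.1 + p2.1 ≤ 1

lemma pcomb_finite (σ1 σ2 : RAMp) : {x | pcomb (σ1.1 x) (σ2.1 x) ≠ none}.Finite := by
  apply Set.Finite.subset (σ1.2.union σ2.2)
  intro x hx
  simp only [Set.mem_setOf_eq, Set.mem_union] at hx ⊢
  by_cases h1 : σ1.1 x = none
  · right
    intro h2
    apply hx
    rw [h1, h2]
    rfl
  · left; exact h1

open Classical in
/-- The `*` operation of `RAM_π`: permission-combining union, undefined when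
the two states are incompatible. -/
noncomputable def rampOp (σ1 σ2 : RAMp) : Option RAMp :=
  if rampCompat σ1 σ2 then
    some ⟨fun x => pcomb (σ1.1 x) (σ2.1 x), pcomb_finite σ1 σ2⟩
  else none

/-- The empty state `[]` of `RAM_π`. -/
def rampEmpty : RAMp := ⟨fun _ => none, by simp⟩

/-- The footprint of a state of `RAM_π`. -/
def footRamp (σ : RAMp) : Set RAMp :=
  {σ' | ∀ σ'', (rampOp σ' σ'').isSome ↔ (rampOp σ σ'').isSome}


noncomputable def permHalf : Perm := ⟨1/2, by norm_num⟩

def singleR (x : ℕ+) (v : ℤ × Perm) : RAMp :=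
  ⟨fun y => if y = x then some v else none, by
    apply Set.Finite.subset (Set.finite_singleton x)
    intro y hy
    simp only [Set.mem_setOf_eq] at hy
    by_contra h
    simp only [Set.mem_singleton_iff] at h
    exact hy (if_neg h)⟩

lemma rampOp_isSome (σ1 σ2 : RAMp) : (rampOp σ1 σ2).isSome ↔ rampCompat σ1 σ2 := by
  unfold rampOp; split <;> simp [*] <;> rfl

lemma compat_singleR (τ : RAMp) (x : ℕ+) (v : ℤ × Perm) :
    rampCompat τ (singleR x v) ↔
      ∀ u (p : Perm), τ.1 x = some (u, p) → u = v.1 ∧ p.1 + v.2.1 ≤ 1 := by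
  constructor
  · intro h u p hp
    exact h x u p v.1 v.2 hp (by simp [singleR])
  · intro h y u1 p1 u2 p2 h1 h2
    by_cases hyx : y = x
    · subst hyx
      have h2' : v = (u2, p2) := by simpa [singleR] using h2
      have := h u1 p1 h1
      rw [h2'] at this
      exact this
    · simp [singleR, hyx] at h2

/-- in `RAM_π`, the footprint of `σ` is exactly the set of states
`σ'` with the same domain as `σ` and the same permissions, agreeing with `σ`
on the value of every cell held with a read permission (`π < 1`). -/
theorem ramp_foot_description (σ : RAMp) :
    footRamp σ = {σ' |
      (∀ x, σ.1 x ≠ none ↔ σ'.1 x ≠ none) ∧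
      ∀ x u, ∀ π : Perm, σ.1 x = some (u, π) →
        (π.1 < 1 → σ'.1 x = some (u, π)) ∧
        (π.1 = 1 → ∃ u', ∃ π' : Perm, σ'.1 x = some (u', π') ∧ π'.1 = 1)} := by
  ext σ'
  simp only [footRamp, Set.mem_setOf_eq]
  constructor
  · intro h
    have h' : ∀ σ'', rampCompat σ' σ'' ↔ rampCompat σ σ'' := fun σ'' => by
      rw [← rampOp_isSome, ← rampOp_isSome]; exact h σ''
    have hdom : ∀ x, σ.1 x ≠ none ↔ σ'.1 x ≠ none := by
      intro x
      constructor
      · intro hs ho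
        obtain ⟨⟨u, p⟩, hu⟩ := Option.ne_none_iff_exists'.mp hs
        have hc : rampCompat σ' (singleR x (u + 1, permHalf)) := by
          rw [compat_singleR]; intro u' p' hp'; rw [ho] at hp'; cases hp'
        have hc2 := (h' _).mp hc
        rw [compat_singleR] at hc2
        have := (hc2 u p hu).1
        omega
      · intro hs ho
        obtain ⟨⟨u, p⟩, hu⟩ := Option.ne_none_iff_exists'.mp hs
        have hc : rampCompat σ (singleR x (u + 1, permHalf)) := by
          rw [compat_singleR]; intro u' p' hp'; rw [ho] at hp'; cases hp'
        have hc2 := (h' _).mpr hc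
        rw [compat_singleR] at hc2
        have := (hc2 u p hu).1
        omega
    refine ⟨hdom, ?_⟩
    intro x u π hx
    have hx' : σ'.1 x ≠ none := (hdom x).mp (by rw [hx]; simp)
    obtain ⟨⟨u', π'⟩, hu'⟩ := Option.ne_none_iff_exists'.mp hx'
    constructor
    · intro hπ
      have hq : (0:ℝ) < 1 - π.1 ∧ (1:ℝ) - π.1 ≤ 1 := ⟨by linarith, by linarith [π.2.1]⟩
      have hc : rampCompat σ (singleR x (u, ⟨1 - π.1, hq⟩)) := by
        rw [compat_singleR]
        intro a q ha
        rw [hx] at ha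
        injection ha with ha
        injection ha with ha1 ha2
        subst ha1; subst ha2
        exact ⟨rfl, by simp⟩
      have hc2 := (h' _).mpr hc
      rw [compat_singleR] at hc2
      obtain ⟨heq, hle⟩ := hc2 u' π' hu'
      have hle' : π'.1 + (1 - π.1) ≤ 1 := hle
      have heq' : u' = u := heq
      have hπ'lt : π'.1 < 1 := by linarith [π'.2.1]
      have hq' : (0:ℝ) < 1 - π'.1 ∧ (1:ℝ) - π'.1 ≤ 1 := ⟨by linarith, by linarith [π'.2.1]⟩
      have hc3 : rampCompat σ' (singleR x (u', ⟨1 - π'.1, hq'⟩)) := by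
        rw [compat_singleR]
        intro a q ha
        rw [hu'] at ha
        injection ha with ha
        injection ha with ha1 ha2
        subst ha1; subst ha2
        exact ⟨rfl, by simp⟩
      have hc4 := (h' _).mp hc3
      rw [compat_singleR] at hc4
      obtain ⟨_, hle2⟩ := hc4 u π hx
      have hle2' : π.1 + (1 - π'.1) ≤ 1 := hle2
      have hππ' : π' = π := Subtype.ext (by linarith)
      rw [hu', heq', hππ']
    · intro hπ
      refine ⟨u', π', hu', ?_⟩
      by_contra hne
      have hπ'lt : π'.1 < 1 := lt_of_le_of_ne π'.2.2 hne
      have hq' : (0:ℝ) < 1 - π'.1 ∧ (1:ℝ) - π'.1 ≤ 1 := ⟨by linarith, by linarith [π'.2.1]⟩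
      have hc : rampCompat σ' (singleR x (u', ⟨1 - π'.1, hq'⟩)) := by
        rw [compat_singleR]
        intro a q ha
        rw [hu'] at ha
        injection ha with ha
        injection ha with ha1 ha2
        subst ha1; subst ha2
        exact ⟨rfl, by simp⟩
      have hc2 := (h' _).mp hc
      rw [compat_singleR] at hc2
      obtain ⟨_, hle⟩ := hc2 u π hx
      have hle' : π.1 + (1 - π'.1) ≤ 1 := hle
      linarith
  · rintro ⟨hdom, hval⟩ σ''
    rw [rampOp_isSome, rampOp_isSome]
    constructor
    · -- rampCompat σ' σ'' → rampCompat σ σ''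
      intro hc x u1 p1 u2 p2 h1 h2
      rcases lt_or_eq_of_le p1.2.2 with hlt | heq
      · have hv := (hval x u1 p1 h1).1 hlt
        exact hc x u1 p1 u2 p2 hv h2
      · obtain ⟨u'', π'', hσ', hπ''⟩ := (hval x u1 p1 h1).2 heq
        have := hc x u'' π'' u2 p2 hσ' h2
        have hp2 := p2.2.1
        rw [hπ''] at this
        exact absurd this.2 (by linarith)
    · -- rampCompat σ σ'' → rampCompat σ' σ''
      intro hc x u1 p1 u2 p2 h1 h2
      have hx' : σ.1 x ≠ none := (hdom x).mpr (by rw [h1]; simp)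
      obtain ⟨⟨u, π⟩, hu⟩ := Option.ne_none_iff_exists'.mp hx'
      rcases lt_or_eq_of_le π.2.2 with hlt | heq
      · have hv := (hval x u π hu).1 hlt
        rw [hv] at h1
        injection h1 with h1
        injection h1 with e1 e2
        subst e1; subst e2
        exact hc x u π u2 p2 hu h2
      · obtain ⟨u'', π'', hσ', hπ''⟩ := (hval x u π hu).2 heq
        rw [hσ'] at h1
        injection h1 with h1
        injection h1 with e1 e2
        subst e1; subst e2
        have := hc x u π u2 p2 hu h2
        have hp2 := p2.2.1
        rw [heq] at this
        exact absurd this.2 (by linarith)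
end

section
/- The operation * of the separation algebra RAM_π is cancellative on footprints: for all σ1, σ2, σ1', σ2' ∈ RAM_π such that σ1 * σ2 and σ1' * σ2' are defined, if δ(σ1 * σ2) = δ(σ1' * σ2') and δ(σ1) = δ(σ1'), then δ(σ2) = δ(σ2'). -/
/-! ### Auxiliary development -/

def cellCompat (a b : Option (ℤ × Perm)) : Prop :=
  ∀ u1 p1 u2 p2, a = some (u1, p1) → b = some (u2, p2) →
    u1 = u2 ∧ p1.1 + p2.1 ≤ 1

lemma cellCompat_some_iff (u v : ℤ) (p q : Perm) :
    cellCompat (some (u, p)) (some (v, q)) ↔ (u = v ∧ p.1 + q.1 ≤ 1) := by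
  constructor
  · intro h; exact h u p v q rfl rfl
  · intro h u1 p1 u2 p2 h1 h2
    simp only [Option.some.injEq, Prod.mk.injEq] at h1 h2
    obtain ⟨rfl, rfl⟩ := h1
    obtain ⟨rfl, rfl⟩ := h2
    exact h

lemma cellCompat_none_left (b : Option (ℤ × Perm)) : cellCompat none b := by
  intro u1 p1 u2 p2 h _; exact absurd h (by simp)

lemma cellCompat_none_right (a : Option (ℤ × Perm)) : cellCompat a none := by
  intro u1 p1 u2 p2 _ h; exact absurd h (by simp)

lemma rampCompat_iff (σ τ : RAMp) :
    rampCompat σ τ ↔ ∀ x, cellCompat (σ.1 x) (τ.1 x) := by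
  constructor
  · intro h x u1 p1 u2 p2 h1 h2; exact h x u1 p1 u2 p2 h1 h2
  · intro h x u1 p1 u2 p2 h1 h2; exact h x u1 p1 u2 p2 h1 h2

lemma isSome_rampOp (σ τ : RAMp) : (rampOp σ τ).isSome ↔ rampCompat σ τ := by
  rw [rampOp]; split_ifs with h <;> simp [h] <;> rfl

lemma foot_eq_iff_s11 (σ τ : RAMp) :
    footRamp σ = footRamp τ ↔ ∀ ρ, (rampCompat σ ρ ↔ rampCompat τ ρ) := by
  constructor
  · intro h ρ
    have hσ : σ ∈ footRamp σ := fun _ => Iff.rfl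
    have : σ ∈ footRamp τ := h ▸ hσ
    have := this ρ
    rwa [isSome_rampOp, isSome_rampOp] at this
  · intro h
    ext ρ
    simp only [footRamp, Set.mem_setOf_eq]
    constructor
    · intro hρ σ''
      rw [hρ σ'', isSome_rampOp, isSome_rampOp, h σ'']
    · intro hρ σ''
      rw [hρ σ'', isSome_rampOp, isSome_rampOp, h σ'']

/-- A singleton state. -/
def rampSingle (x : ℕ+) (u : ℤ) (p : Perm) : RAMp :=
  ⟨fun y => if y = x then some (u, p) else none, by
    apply Set.Finite.subset (Set.finite_singleton x)
    intro y hy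
    simp only [Set.mem_setOf_eq] at hy
    by_cases hyx : y = x
    · simp [hyx]
    · simp [hyx] at hy⟩

lemma compat_single (σ : RAMp) (x : ℕ+) (u : ℤ) (p : Perm) :
    rampCompat σ (rampSingle x u p) ↔ cellCompat (σ.1 x) (some (u, p)) := by
  constructor
  · intro h u1 p1 u2 p2 h1 h2
    refine h x u1 p1 u2 p2 h1 ?_
    simp only [rampSingle, if_pos rfl]
    exact h2
  · intro h y u1 p1 u2 p2 h1 h2
    by_cases hyx : y = x
    · subst hyx
      simp only [rampSingle, if_pos rfl] at h2
      exact h u1 p1 u2 p2 h1 h2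
    · simp only [rampSingle, if_neg hyx] at h2
      exact absurd h2 (by simp)

lemma pointwise_of_compatEquiv {σ τ : RAMp}
    (h : ∀ ρ, rampCompat σ ρ ↔ rampCompat τ ρ) (x : ℕ+) :
    ∀ c, cellCompat (σ.1 x) c ↔ cellCompat (τ.1 x) c := by
  intro c
  cases c with
  | none => exact iff_of_true (cellCompat_none_right _) (cellCompat_none_right _)
  | some v =>
    obtain ⟨u, p⟩ := v
    rw [← compat_single σ x u p, ← compat_single τ x u p]
    exact h _

lemma compatEquiv_of_pointwise {σ τ : RAMp}
    (h : ∀ x c, cellCompat (σ.1 x) c ↔ cellCompat (τ.1 x) c) :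
    ∀ ρ, rampCompat σ ρ ↔ rampCompat τ ρ := by
  intro ρ
  rw [rampCompat_iff, rampCompat_iff]
  exact forall_congr' fun x => h x (ρ.1 x)

/-- Classification of cell equivalence. -/
lemma cellE_cases {a b : Option (ℤ × Perm)}
    (h : ∀ c, cellCompat a c ↔ cellCompat b c) :
    a = b ∨ ∃ u v p q, a = some (u, p) ∧ b = some (v, q) ∧ p.1 = 1 ∧ q.1 = 1 := by
  cases a with
  | none =>
    left
    cases b with
    | none => rfl
    | some vb =>
      obtain ⟨v, q⟩ := vb
      exfalso
      have hc : cellCompat (some (v, q)) (some (v + 1, ⟨1, by norm_num⟩)) :=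
        (h _).mp (cellCompat_none_left _)
      have := (hc v q (v+1) ⟨1, by norm_num⟩ rfl rfl).1
      omega
  | some va =>
    obtain ⟨u, p⟩ := va
    cases b with
    | none =>
      exfalso
      have hc : cellCompat (some (u, p)) (some (u + 1, ⟨1, by norm_num⟩)) :=
        (h _).mpr (cellCompat_none_left _)
      have := (hc u p (u+1) ⟨1, by norm_num⟩ rfl rfl).1
      omega
    | some vb =>
      obtain ⟨v, q⟩ := vb
      by_cases hp : p.1 = 1
      · right
        refine ⟨u, v, p, q, rfl, rfl, hp, ?_⟩
        by_contra hq
        have hq1 : q.1 < 1 := lt_of_le_of_ne q.2.2 hq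
        have hq0 := q.2.1
        have hbc : cellCompat (some (v, q))
            (some (v, ⟨1 - q.1, by constructor <;> linarith⟩)) :=
          (cellCompat_some_iff ..).mpr ⟨rfl, by simp⟩
        have hac := (h _).mpr hbc
        have := ((cellCompat_some_iff ..).mp hac).2
        simp only at this
        linarith
      · left
        have hp1 : p.1 < 1 := lt_of_le_of_ne p.2.2 hp
        have hp0 := p.2.1
        have hac : cellCompat (some (u, p))
            (some (u, ⟨1 - p.1, by constructor <;> linarith⟩)) :=
          (cellCompat_some_iff ..).mpr ⟨rfl, by simp⟩
        have hbc := (h _).mp hac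
        obtain ⟨hvu, hqp⟩ := (cellCompat_some_iff ..).mp hbc
        simp only at hqp
        have hqlep : q.1 ≤ p.1 := by linarith
        have hq1 : q.1 < 1 := lt_of_le_of_lt hqlep hp1
        have hq0 := q.2.1
        have hbc2 : cellCompat (some (v, q))
            (some (v, ⟨1 - q.1, by constructor <;> linarith⟩)) :=
          (cellCompat_some_iff ..).mpr ⟨rfl, by simp⟩
        have hac2 := (h _).mpr hbc2
        obtain ⟨huv, hpq⟩ := (cellCompat_some_iff ..).mp hac2
        simp only at hpq
        have hpleq : p.1 ≤ q.1 := by linarith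
        have : p = q := Subtype.ext (le_antisymm hpleq hqlep)
        rw [huv, this]

lemma pcomb_none_left (b : Option (ℤ × Perm)) : pcomb none b = b := rfl

lemma pcomb_some_none (v : ℤ × Perm) : pcomb (some v) none = some v := rfl

lemma pcomb_some_some {u1 u2 : ℤ} {p1 p2 : Perm} (hu : u1 = u2) (hle : p1.1 + p2.1 ≤ 1) :
    pcomb (some (u1, p1)) (some (u2, p2)) =
      some (u1, ⟨p1.1 + p2.1, ⟨add_pos p1.2.1 p2.2.1, hle⟩⟩) := by
  show (if h : u1 = u2 ∧ p1.1 + p2.1 ≤ 1 then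
      some (u1, (⟨p1.1 + p2.1, ⟨add_pos p1.2.1 p2.2.1, h.2⟩⟩ : Perm)) else none) = _
  rw [dif_pos ⟨hu, hle⟩]
  rfl

lemma cellCompat_full {u : ℤ} {p : Perm} (hp : p.1 = 1) (c : Option (ℤ × Perm)) :
    cellCompat (some (u, p)) c ↔ c = none := by
  constructor
  · intro h
    cases c with
    | none => rfl
    | some vc =>
      obtain ⟨v, q⟩ := vc
      obtain ⟨hv, hle⟩ := (cellCompat_some_iff ..).mp h
      have := q.2.1
      exfalso; rw [hp] at hle; linarith
  · rintro rfl; exact cellCompat_none_right _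

/-- Pointwise cancellation. -/
lemma cell_cancel {a1 a2 a1' a2' : Option (ℤ × Perm)}
    (h12 : cellCompat a1 a2) (h12' : cellCompat a1' a2')
    (hc : ∀ c, cellCompat (pcomb a1 a2) c ↔ cellCompat (pcomb a1' a2') c)
    (h1 : ∀ c, cellCompat a1 c ↔ cellCompat a1' c) :
    ∀ c, cellCompat a2 c ↔ cellCompat a2' c := by
  rcases cellE_cases h1 with heq | ⟨u, v, p, q, ha1, ha1', hp, hq⟩
  · -- a1 = a1'
    subst heq
    cases a1 with
    | none =>
      rw [pcomb_none_left, pcomb_none_left] at hc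
      exact hc
    | some va =>
      obtain ⟨u, p⟩ := va
      rcases cellE_cases hc with hceq | ⟨w, w', r, r', hr, hr', hr1, hr1'⟩
      · -- combined cells are equal
        cases a2 with
        | none =>
          cases a2' with
          | none => intro c; rfl
          | some vb' =>
            obtain ⟨u2', p2'⟩ := vb'
            obtain ⟨hu', hle'⟩ := (cellCompat_some_iff ..).mp
              ((fun h => h) <| by
                intro u1 q1 u3 q3 ha hb
                exact h12' u1 q1 u3 q3 ha hb)
            rw [pcomb_some_none, pcomb_some_some hu' hle'] at hceq
            exfalso
            have := p2'.2.1
            simp only [Option.some.injEq, Prod.mk.injEq, Subtype.mk.injEq] at hceq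
            have h2 := congrArg (fun r : ℤ × Perm => r.2.1) hceq
            simp only at h2
            linarith
        | some vb =>
          obtain ⟨u2, p2⟩ := vb
          obtain ⟨hu, hle⟩ := (cellCompat_some_iff ..).mp h12
          cases a2' with
          | none =>
            rw [pcomb_some_some hu hle, pcomb_some_none] at hceq
            exfalso
            have := p2.2.1
            simp only [Option.some.injEq, Prod.mk.injEq, Subtype.mk.injEq] at hceq
            have h2 := congrArg (fun r : ℤ × Perm => r.2.1) hceq
            simp only at h2
            linarith
          | some vb' =>
            obtain ⟨u2', p2'⟩ := vb'
            obtain ⟨hu', hle'⟩ := (cellCompat_some_iff ..).mp h12'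
            rw [pcomb_some_some hu hle, pcomb_some_some hu' hle'] at hceq
            simp only [Option.some.injEq, Prod.mk.injEq, Subtype.mk.injEq] at hceq
            have h2 : p.1 + p2.1 = p.1 + p2'.1 := congrArg (fun r : ℤ × Perm => r.2.1) hceq
            have hp2 : p2 = p2' := Subtype.ext (by linarith)
            have hu2 : u2 = u2' := by rw [← hu, hu']
            rw [hu2, hp2]
            intro c; rfl
      · -- both combined cells are full
        cases a2 with
        | none =>
          rw [pcomb_some_none] at hr
          simp only [Option.some.injEq, Prod.mk.injEq] at hr
          have hpfull : p.1 = 1 := by rw [hr.2, hr1]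
          cases a2' with
          | none => intro c; rfl
          | some vb' =>
            obtain ⟨u2', p2'⟩ := vb'
            obtain ⟨hu', hle'⟩ := (cellCompat_some_iff ..).mp h12'
            exfalso
            have := p2'.2.1
            rw [hpfull] at hle'
            linarith
        | some vb =>
          obtain ⟨u2, p2⟩ := vb
          obtain ⟨hu, hle⟩ := (cellCompat_some_iff ..).mp h12
          rw [pcomb_some_some hu hle] at hr
          simp only [Option.some.injEq, Prod.mk.injEq, Subtype.mk.injEq] at hr
          have hsum : p.1 + p2.1 = 1 := by
            have := congrArg (fun r : ℤ × Perm => r.2.1) hr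
            simp only at this
            rw [this, hr1]
          cases a2' with
          | none =>
            rw [pcomb_some_none] at hr'
            simp only [Option.some.injEq, Prod.mk.injEq] at hr'
            have : p.1 = 1 := by rw [hr'.2, hr1']
            exfalso
            have := p2.2.1
            linarith
          | some vb' =>
            obtain ⟨u2', p2'⟩ := vb'
            obtain ⟨hu', hle'⟩ := (cellCompat_some_iff ..).mp h12'
            rw [pcomb_some_some hu' hle'] at hr'
            simp only [Option.some.injEq, Prod.mk.injEq, Subtype.mk.injEq] at hr'
            have hsum' : p.1 + p2'.1 = 1 := by
              have := congrArg (fun r : ℤ × Perm => r.2.1) hr'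
              simp only at this
              rw [this, hr1']
            have hp2 : p2 = p2' := Subtype.ext (by linarith)
            have hu2 : u2 = u2' := by rw [← hu, hu']
            rw [hu2, hp2]
            intro c; rfl
  · -- a1, a1' both full
    have ha2 : a2 = none := by
      cases a2 with
      | none => rfl
      | some vb =>
        obtain ⟨u2, p2⟩ := vb
        rw [ha1] at h12
        obtain ⟨_, hle⟩ := (cellCompat_some_iff ..).mp h12
        exfalso
        have := p2.2.1
        rw [hp] at hle; linarith
    have ha2' : a2' = none := by
      cases a2' with
      | none => rfl
      | some vb' =>
        obtain ⟨u2', p2'⟩ := vb'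
        rw [ha1'] at h12'
        obtain ⟨_, hle'⟩ := (cellCompat_some_iff ..).mp h12'
        exfalso
        have := p2'.2.1
        rw [hq] at hle'; linarith
    rw [ha2, ha2']
    intro c; rfl

lemma rampOp_eq_some {σ1 σ2 s : RAMp} (h : rampOp σ1 σ2 = some s) :
    rampCompat σ1 σ2 ∧ ∀ x, s.1 x = pcomb (σ1.1 x) (σ2.1 x) := by
  rw [rampOp] at h
  split_ifs at h with hcomp
  · refine ⟨hcomp, ?_⟩
    injection h with h
    intro x
    rw [← h]

/-- the `*` operation of `RAM_π` is cancellative on footprints. -/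
theorem ramp_cancOnFoot (σ1 σ2 σ1' σ2' s s' : RAMp)
    (h : rampOp σ1 σ2 = some s) (h' : rampOp σ1' σ2' = some s')
    (hf : footRamp s = footRamp s') (hf1 : footRamp σ1 = footRamp σ1') :
    footRamp σ2 = footRamp σ2' := by
  obtain ⟨hcomp, hs⟩ := rampOp_eq_some h
  obtain ⟨hcomp', hs'⟩ := rampOp_eq_some h'
  rw [foot_eq_iff_s11] at hf hf1 ⊢
  apply compatEquiv_of_pointwise
  intro x
  have hcells : ∀ c, cellCompat (pcomb (σ1.1 x) (σ2.1 x)) c ↔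
      cellCompat (pcomb (σ1'.1 x) (σ2'.1 x)) c := by
    have := pointwise_of_compatEquiv hf x
    rwa [hs x, hs' x] at this
  exact cell_cancel ((rampCompat_iff ..).mp hcomp x) ((rampCompat_iff ..).mp hcomp' x)
    hcells (pointwise_of_compatEquiv hf1 x)
end

section
/- In the separation algebra RAM, footprint subtraction has the following explicit description: for σ1, σ2 ∈ RAM with l1 = δ(σ1) and l2 = δ(σ2), if dom σ1 ⊆ dom σ2 then l2 \\ l1 is defined and equals {σ ∈ RAM | dom σ is disjoint from dom σ1 and dom σ ∪ dom σ1 = dom σ2}, and if dom σ1 ⊄ dom σ2 then l2 \\ l1 is undefined. -/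
/-- `RAM`: finite partial functions from `Loc = {1,2,...}` (modelled as `ℕ+`)
to `Val = ℤ`. -/
def RAM : Type := { f : ℕ+ → Option ℤ // {x | f x ≠ none}.Finite }

/-- Union of two partial heaps (left-biased; used only on disjoint heaps). -/
def ramFun (σ1 σ2 : RAM) : ℕ+ → Option ℤ := fun x => (σ1.1 x).or (σ2.1 x)

lemma ramFun_finite (σ1 σ2 : RAM) : {x | ramFun σ1 σ2 x ≠ none}.Finite := by
  apply Set.Finite.subset (σ1.2.union σ2.2)
  intro x hx
  simp only [Set.mem_setOf_eq, ramFun, Set.mem_union] at hx ⊢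
  by_cases h1 : σ1.1 x = none
  · right; simpa [h1] using hx
  · left; exact h1

open Classical in
/-- The `*` operation of `RAM`: disjoint union of heaps, undefined (`none`)
when the domains overlap. -/
noncomputable def ramOp (σ1 σ2 : RAM) : Option RAM :=
  if ∀ x, σ1.1 x = none ∨ σ2.1 x = none then
    some ⟨ramFun σ1 σ2, ramFun_finite σ1 σ2⟩
  else none

/-- The empty heap `[]`. -/
def ramEmpty : RAM := ⟨fun _ => none, by simp⟩

/-- The footprint of a state of `RAM`. -/
def footRam (σ : RAM) : Set RAM :=
  {σ' | ∀ σ'', (ramOp σ' σ'').isSome ↔ (ramOp σ σ'').isSome}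

/-- The domain of a state of `RAM`. -/
def ramDom (σ : RAM) : Set ℕ+ := {x | σ.1 x ≠ none}

/-- `FpSubRam l1 l2 l` : footprint subtraction `l2 \\ l1` in `RAM` is defined
with value `l`. -/
def FpSubRam (l1 l2 l : Set RAM) : Prop :=
  ∃ σ1 σ2 σ, footRam σ1 = l1 ∧ footRam σ2 = l2 ∧ ramOp σ1 σ = some σ2 ∧ footRam σ = l

lemma ramOp_isSome {a b : RAM} :
    (ramOp a b).isSome ↔ ∀ x, a.1 x = none ∨ b.1 x = none := by
  unfold ramOp; split <;> simp_all <;> rfl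

def ramSingle (x : ℕ+) : RAM :=
  ⟨fun y => if y = x then some 0 else none,
    Set.Finite.subset (Set.finite_singleton x) (by
      intro y hy
      simp only [Set.mem_setOf_eq] at hy
      by_contra h
      simp only [Set.mem_singleton_iff] at h
      simp [h] at hy)⟩

lemma mem_footRam {σ' σ : RAM} : σ' ∈ footRam σ ↔ ramDom σ' = ramDom σ := by
  constructor
  · intro h
    ext x
    have hx := h (ramSingle x)
    rw [ramOp_isSome, ramOp_isSome] at hx
    have key : ∀ τ : RAM, (∀ y, τ.1 y = none ∨ (ramSingle x).1 y = none) ↔ τ.1 x = none := by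
      intro τ
      constructor
      · intro H
        rcases H x with h1 | h1
        · exact h1
        · simp [ramSingle] at h1
      · intro h1 y
        by_cases hy : y = x
        · left; exact hy ▸ h1
        · right; simp [ramSingle, hy]
    rw [key, key] at hx
    simp only [ramDom, Set.mem_setOf_eq]
    exact not_congr hx
  · intro h σ''
    rw [ramOp_isSome, ramOp_isSome]
    have hx : ∀ x, σ'.1 x = none ↔ σ.1 x = none := by
      intro x
      have := Set.ext_iff.mp h x
      simp only [ramDom, Set.mem_setOf_eq] at this
      exact not_iff_not.mp this
    constructor <;> intro H x <;> rcases H x with h1 | h1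
    · exact Or.inl ((hx x).mp h1)
    · exact Or.inr h1
    · exact Or.inl ((hx x).mpr h1)
    · exact Or.inr h1

lemma footRam_eq_iff {σ σ' : RAM} : footRam σ = footRam σ' ↔ ramDom σ = ramDom σ' := by
  constructor
  · intro h
    have : σ ∈ footRam σ' := h ▸ (mem_footRam.mpr rfl)
    exact mem_footRam.mp this
  · intro h
    ext τ
    rw [mem_footRam, mem_footRam, h]

lemma ramOp_dom {a b c : RAM} (h : ramOp a b = some c) :
    (∀ x, a.1 x = none ∨ b.1 x = none) ∧ ramDom c = ramDom a ∪ ramDom b := by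
  unfold ramOp at h
  split at h
  · rename_i hc
    refine ⟨hc, ?_⟩
    obtain rfl : c = ⟨ramFun a b, ramFun_finite a b⟩ := (Option.some_injective _ h).symm
    ext x
    simp only [ramDom, Set.mem_setOf_eq, Set.mem_union, ramFun]
    cases ha : a.1 x <;> cases hb : b.1 x <;> simp
  · exact absurd h (by simp)
/-- in `RAM`, if `dom σ1 ⊆ dom σ2` then `δ(σ2) \\ δ(σ1)` is
defined and equals `{σ | dom σ ∩ dom σ1 = ∅ ∧ dom σ ∪ dom σ1 = dom σ2}`;
if `dom σ1 ⊄ dom σ2` then `δ(σ2) \\ δ(σ1)` is undefined. -/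
theorem ram_fpSub_description (σ1 σ2 : RAM) :
    (ramDom σ1 ⊆ ramDom σ2 →
      FpSubRam (footRam σ1) (footRam σ2)
        {σ | ramDom σ ∩ ramDom σ1 = ∅ ∧ ramDom σ ∪ ramDom σ1 = ramDom σ2} ∧
      ∀ l, FpSubRam (footRam σ1) (footRam σ2) l →
        l = {σ | ramDom σ ∩ ramDom σ1 = ∅ ∧ ramDom σ ∪ ramDom σ1 = ramDom σ2}) ∧
    (¬ ramDom σ1 ⊆ ramDom σ2 → ¬ ∃ l, FpSubRam (footRam σ1) (footRam σ2) l) := by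
  classical
  have target_iff : ∀ hsub : ramDom σ1 ⊆ ramDom σ2, ∀ τ : RAM,
      (ramDom τ ∩ ramDom σ1 = ∅ ∧ ramDom τ ∪ ramDom σ1 = ramDom σ2) ↔
      ramDom τ = ramDom σ2 \ ramDom σ1 := by
    intro hsub τ
    constructor
    · rintro ⟨hdisj, huni⟩
      ext x
      constructor
      · intro hx
        refine ⟨huni ▸ Or.inl hx, fun hx1 => ?_⟩
        exact absurd (Set.mem_inter hx hx1) (by rw [hdisj]; exact Set.notMem_empty x)
      · rintro ⟨hx2, hx1⟩
        rcases (Set.ext_iff.mp huni x).mpr hx2 with h | h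
        · exact h
        · exact absurd h hx1
    · intro h
      constructor
      · rw [h]; ext x; simp
      · rw [h]; ext x
        simp only [Set.mem_union, Set.mem_diff, Set.mem_setOf_eq]
        constructor
        · rintro (⟨ha, -⟩ | ha)
          · exact ha
          · exact hsub ha
        · intro hx; by_cases hx1 : x ∈ ramDom σ1
          · exact Or.inr hx1
          · exact Or.inl ⟨hx, hx1⟩
  constructor
  · intro hsub
    -- witnesses
    have fin1 : {x | (if σ1.1 x = none then none else σ2.1 x) ≠ none}.Finite := by
      apply σ1.2.subset
      intro x hx
      simp only [Set.mem_setOf_eq] at hx ⊢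
      intro h; simp [h] at hx
    have fin2 : {x | (if σ1.1 x = none then σ2.1 x else none) ≠ none}.Finite := by
      apply σ2.2.subset
      intro x hx
      simp only [Set.mem_setOf_eq] at hx ⊢
      intro h
      by_cases h1 : σ1.1 x = none <;> simp [h1, h] at hx
    set τ1 : RAM := ⟨fun x => if σ1.1 x = none then none else σ2.1 x, fin1⟩ with hτ1
    set τ : RAM := ⟨fun x => if σ1.1 x = none then σ2.1 x else none, fin2⟩ with hτ
    have hdom1 : ramDom τ1 = ramDom σ1 := by
      ext x
      simp only [ramDom, Set.mem_setOf_eq, hτ1]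
      by_cases h1 : σ1.1 x = none
      · simp [h1]
      · have h2 : σ2.1 x ≠ none := hsub h1
        simp [h1, h2]
    have hdomτ : ramDom τ = ramDom σ2 \ ramDom σ1 := by
      ext x
      simp only [ramDom, Set.mem_setOf_eq, hτ, Set.mem_diff]
      by_cases h1 : σ1.1 x = none <;> simp [h1]
    have hop : ramOp τ1 τ = some σ2 := by
      unfold ramOp
      rw [if_pos]
      · congr 1
        apply Subtype.ext
        funext x
        simp only [ramFun, hτ1, hτ]
        by_cases h1 : σ1.1 x = none
        · simp [h1]
        · have h2 : σ2.1 x ≠ none := hsub h1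
          simp [h1]
      · intro x
        by_cases h1 : σ1.1 x = none
        · left; simp [hτ1, h1]
        · right; simp [hτ, h1]
    have hfootτ : footRam τ =
        {σ | ramDom σ ∩ ramDom σ1 = ∅ ∧ ramDom σ ∪ ramDom σ1 = ramDom σ2} := by
      ext ρ
      rw [mem_footRam, Set.mem_setOf_eq, target_iff hsub, hdomτ]
    refine ⟨⟨τ1, σ2, τ, footRam_eq_iff.mpr hdom1, rfl, hop, hfootτ⟩, ?_⟩
    rintro l ⟨ρ1, ρ2, ρ, h1, h2, hop', h3⟩
    have hd1 : ramDom ρ1 = ramDom σ1 := footRam_eq_iff.mp h1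
    have hd2 : ramDom ρ2 = ramDom σ2 := footRam_eq_iff.mp h2
    obtain ⟨hdisj, huni⟩ := ramOp_dom hop'
    have hdρ : ramDom ρ = ramDom σ2 \ ramDom σ1 := by
      rw [← hd2, huni, ← hd1]
      ext x
      simp only [Set.mem_diff, Set.mem_union, ramDom, Set.mem_setOf_eq]
      rcases hdisj x with h | h <;> by_cases hx : ρ.1 x = none <;> simp [h, hx]
    rw [← h3]
    ext ρ'
    rw [mem_footRam, Set.mem_setOf_eq, target_iff hsub, hdρ]
  · rintro hnsub ⟨l, ρ1, ρ2, ρ, h1, h2, hop', -⟩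
    apply hnsub
    have hd1 : ramDom ρ1 = ramDom σ1 := footRam_eq_iff.mp h1
    have hd2 : ramDom ρ2 = ramDom σ2 := footRam_eq_iff.mp h2
    obtain ⟨-, huni⟩ := ramOp_dom hop'
    rw [← hd1, ← hd2, huni]
    exact Set.subset_union_left
end
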